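/- Let s₁ = 1, s₂ = 3, c = 1/4, α = (1), β = (0, 1/2, 1/2), A⁰ = (1/2) (a 1×1 matrix), B⁰ the 1×3 matrix (1/2, 0, 0), A¹ the 3×1 matrix with entries (0; 1/2; 1/2), B¹ the 3×3 matrix with rows (0,0,0), (1/2,0,0), (1/2,0,0), and B̂¹ the 3×3 matrix with rows (1/2,0,0), ((3−2√3)/6, √3/6, 0), ((−3+2√3)/6, 1/2, (3−√3)/6). Then these coefficients satisfy all of the reduced Stratonovich order conditions (1)–(26) with c = 1/4. -/
import Mathlib


open Matrix

set_option maxHeartbeats 2000000 in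
theorem stmt15
    (c : ℝ) (α : Fin 1 → ℝ) (β : Fin 3 → ℝ)
    (A0 : Matrix (Fin 1) (Fin 1) ℝ) (B0 : Matrix (Fin 1) (Fin 3) ℝ)
    (A1 : Matrix (Fin 3) (Fin 1) ℝ) (B1 : Matrix (Fin 3) (Fin 3) ℝ)
    (Bh : Matrix (Fin 3) (Fin 3) ℝ)
    (hc : c = 1 / 4)
    (hα : α = ![1]) (hβ : β = ![0, 1/2, 1/2])
    (hA0 : A0 = !![1/2]) (hB0 : B0 = !![1/2, 0, 0])
    (hA1 : A1 = !![0; 1/2; 1/2]) (hB1 : B1 = !![0, 0, 0; 1/2, 0, 0; 1/2, 0, 0])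
    (hBh : Bh = !![1/2, 0, 0; (3 - 2 * Real.sqrt 3) / 6, Real.sqrt 3 / 6, 0; (-3 + 2 * Real.sqrt 3) / 6, 1/2, (3 - Real.sqrt 3) / 6]) :
    α ⬝ᵥ (1 : Fin 1 → ℝ) = 1 ∧
    β ⬝ᵥ (1 : Fin 3 → ℝ) = 1 ∧
    β ⬝ᵥ (Bh *ᵥ 1) = 1/2 ∧
    α ⬝ᵥ (A0 *ᵥ 1) = 1/2 ∧
    α ⬝ᵥ (B0 *ᵥ 1) = 1/2 ∧
    α ⬝ᵥ ((B0 *ᵥ 1) * (B0 *ᵥ 1)) = c ∧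
    α ⬝ᵥ (B0 *ᵥ (Bh *ᵥ 1)) = 1/4 ∧
    β ⬝ᵥ (A1 *ᵥ 1) = 1/2 ∧
    β ⬝ᵥ ((Bh *ᵥ 1) * (A1 *ᵥ 1)) = 1/4 ∧
    β ⬝ᵥ (Bh *ᵥ (A1 *ᵥ 1)) = 1/4 ∧
    β ⬝ᵥ (B1 *ᵥ 1) = 1/2 ∧
    β ⬝ᵥ ((B1 *ᵥ 1) * (B1 *ᵥ 1)) = 1/4 ∧
    β ⬝ᵥ (Bh *ᵥ (B1 *ᵥ (Bh *ᵥ 1))) = 1/8 ∧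
    β ⬝ᵥ ((Bh *ᵥ 1) * (B1 *ᵥ (Bh *ᵥ 1))) = 1/8 ∧
    β ⬝ᵥ ((Bh *ᵥ 1) * ((B1 *ᵥ 1) * (B1 *ᵥ 1))) = 1/8 ∧
    β ⬝ᵥ ((B1 *ᵥ 1) * (Bh *ᵥ (B1 *ᵥ 1))) = 1/8 ∧
    β ⬝ᵥ (Bh *ᵥ ((B1 *ᵥ 1) * (B1 *ᵥ 1))) = 1/8 ∧
    β ⬝ᵥ ((B1 *ᵥ 1) * (Bh *ᵥ 1)) = 1/4 ∧
    β ⬝ᵥ (Bh *ᵥ (B1 *ᵥ 1)) = 1/4 ∧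
    β ⬝ᵥ (B1 *ᵥ (Bh *ᵥ 1)) = 1/4 ∧
    β ⬝ᵥ ((Bh *ᵥ 1) * (Bh *ᵥ (Bh *ᵥ 1))) = 1/8 ∧
    β ⬝ᵥ (Bh *ᵥ ((Bh *ᵥ 1) * (Bh *ᵥ 1))) = 1/12 ∧
    β ⬝ᵥ (Bh *ᵥ (Bh *ᵥ (Bh *ᵥ 1))) = 1/24 ∧
    β ⬝ᵥ ((Bh *ᵥ 1) * (Bh *ᵥ 1) * (Bh *ᵥ 1)) = 1/4 ∧
    β ⬝ᵥ ((Bh *ᵥ 1) * (Bh *ᵥ 1)) = 1/3 ∧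
    β ⬝ᵥ (Bh *ᵥ (Bh *ᵥ 1)) = 1/6 := by
  subst hc hα hβ hA0 hB0 hA1 hB1 hBh
  have h3 : Real.sqrt 3 * Real.sqrt 3 = 3 := Real.mul_self_sqrt (by norm_num)
  simp only [Matrix.mulVec, dotProduct, Fin.sum_univ_three, Fin.sum_univ_one,
    Matrix.cons_val', Matrix.cons_val_zero, Matrix.cons_val_one, Matrix.head_cons,
    Matrix.cons_val_two, Matrix.tail_cons, Matrix.empty_val', Matrix.cons_val_fin_one,
    Matrix.head_fin_const, Pi.one_apply, Pi.mul_apply, Matrix.of_apply]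
  refine ⟨?_,?_,?_,?_,?_,?_,?_,?_,?_,?_,?_,?_,?_,?_,?_,?_,?_,?_,?_,?_,?_,?_,?_,?_,?_,?_⟩ <;>
    nlinarith [h3, Real.sqrt_nonneg 3]
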